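/- arXiv:2210.09768 — 3 statements merged into one kernel-verified Lean document; each statement's English description precedes it below -/
import Mathlib

section
/- Let $0 < m < N$ and let $\mu$ be a finite positive Borel measure on $\mathbb{R}^N$. If the Riesz potential $I_m\mu(x) = \int_{\mathbb{R}^N} |x-y|^{m-N}\, d\mu(y)$ belongs to $L^p(\mathbb{R}^N)$ for some $p$ with $1 < p \le N/(N-m)$, then $\mu = 0$. -/
open MeasureTheory Metric ENNReal

/-- If the Riesz potential `I_m μ` of a finite positive Borel measure `μ`
on `ℝ^N` is in `L^p` for some `1 < p ≤ N/(N-m)`, then `μ = 0`. -/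
theorem stmt0 (N : ℕ) (hN : 2 ≤ N) (m p : ℝ) (hm0 : 0 < m) (hmN : m < N)
    (hp1 : 1 < p) (hp2 : p ≤ (N : ℝ) / ((N : ℝ) - m))
    (μ : Measure (EuclideanSpace ℝ (Fin N))) [IsFiniteMeasure μ]
    (h : ∫⁻ x, (∫⁻ y, (ENNReal.ofReal ‖x - y‖) ^ (m - (N : ℝ)) ∂μ) ^ p < ⊤) :
    μ = 0 := by
  classical
  set E := EuclideanSpace ℝ (Fin N)
  by_contra hμ
  haveI : Nonempty (Fin N) := ⟨⟨0, by omega⟩⟩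
  haveI : Nontrivial E := by
    unfold E; infer_instance
  -- basic positivity facts
  have hNm : (0:ℝ) < (N:ℝ) - m := by linarith
  have hp0 : (0:ℝ) < p := by linarith
  set s : ℝ := ((N:ℝ) - m) * p with hs_def
  have hs0 : 0 < s := mul_pos hNm hp0
  have hsN : s ≤ (N:ℝ) := by
    rw [hs_def]
    calc ((N:ℝ) - m) * p ≤ ((N:ℝ) - m) * ((N:ℝ) / ((N:ℝ) - m)) :=
          mul_le_mul_of_nonneg_left hp2 hNm.le
      _ = (N:ℝ) := by field_simp
  -- find a ball of positive measure
  have hex : ∃ n : ℕ, μ (closedBall (0:E) n) ≠ 0 := by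
    by_contra hc
    push_neg at hc
    apply hμ
    have h0 : μ Set.univ = 0 := by
      rw [← iUnion_closedBall_nat (0:E)]
      exact measure_iUnion_null fun n => hc n
    exact Measure.measure_univ_eq_zero.mp h0
  obtain ⟨n, hn⟩ := hex
  set R : ℝ := max (n:ℝ) 1 with hRdef
  have hR1 : (1:ℝ) ≤ R := le_max_right _ _
  have hR0 : (0:ℝ) < R := lt_of_lt_of_le one_pos hR1
  set B := closedBall (0:E) R with hBdef
  have hB : 0 < μ B :=
    lt_of_lt_of_le hn.bot_lt (measure_mono (closedBall_subset_closedBall (le_max_left _ _)))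
  have hBne : μ B ≠ ⊤ := measure_ne_top μ B
  -- pointwise lower bound for the potential
  have key : ∀ x : E, R ≤ ‖x‖ →
      ENNReal.ofReal ((2 * ‖x‖) ^ (-s)) * (μ B) ^ p ≤
        (∫⁻ y, (ENNReal.ofReal ‖x - y‖) ^ (m - (N:ℝ)) ∂μ) ^ p := by
    intro x hx
    have hx0 : 0 < ‖x‖ := lt_of_lt_of_le hR0 hx
    have h2x : 0 < 2 * ‖x‖ := by linarith
    have h1 : ENNReal.ofReal ((2 * ‖x‖) ^ (m - (N:ℝ))) * μ B ≤
        ∫⁻ y, (ENNReal.ofReal ‖x - y‖) ^ (m - (N:ℝ)) ∂μ := by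
      calc ENNReal.ofReal ((2 * ‖x‖) ^ (m - (N:ℝ))) * μ B
          = ∫⁻ _ in B, ENNReal.ofReal ((2 * ‖x‖) ^ (m - (N:ℝ))) ∂μ :=
            (setLIntegral_const B _).symm
        _ ≤ ∫⁻ y in B, (ENNReal.ofReal ‖x - y‖) ^ (m - (N:ℝ)) ∂μ := by
            refine setLIntegral_mono' measurableSet_closedBall fun y hy => ?_
            rcases eq_or_lt_of_le (norm_nonneg (x - y)) with h0 | hpos
            · rw [← h0]
              simp only [ENNReal.ofReal_zero]
              rw [ENNReal.zero_rpow_of_neg (by linarith)]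
              exact le_top
            · rw [ENNReal.ofReal_rpow_of_pos hpos]
              apply ENNReal.ofReal_le_ofReal
              apply Real.rpow_le_rpow_of_nonpos hpos _ (by linarith)
              have hy' : ‖y‖ ≤ R := by
                simpa [hBdef, dist_eq_norm] using hy
              calc ‖x - y‖ ≤ ‖x‖ + ‖y‖ := norm_sub_le _ _
                _ ≤ ‖x‖ + ‖x‖ := by linarith [le_trans hy' hx]
                _ = 2 * ‖x‖ := by ring
        _ ≤ ∫⁻ y, (ENNReal.ofReal ‖x - y‖) ^ (m - (N:ℝ)) ∂μ :=
            setLIntegral_le_lintegral _ _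
    have h2 := ENNReal.rpow_le_rpow h1 hp0.le
    rw [ENNReal.mul_rpow_of_nonneg _ _ hp0.le] at h2
    rw [ENNReal.ofReal_rpow_of_pos (Real.rpow_pos_of_pos h2x (m - (N:ℝ)))] at h2
    rw [← Real.rpow_mul h2x.le] at h2
    have hexp : (m - (N:ℝ)) * p = -s := by rw [hs_def]; ring
    rw [hexp] at h2
    exact h2
  -- the annuli
  set A : ℕ → Set E := fun k => ball (0:E) (2 ^ (k+1) * R) \ ball (0:E) (2 ^ k * R) with hAdef
  have hAmeas : ∀ k, MeasurableSet (A k) := fun k =>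
    measurableSet_ball.diff measurableSet_ball
  have hApow : ∀ k : ℕ, (0:ℝ) < 2 ^ k * R := fun k => by positivity
  have hAsub : ∀ k, ∀ x ∈ A k, 2 ^ k * R ≤ ‖x‖ ∧ ‖x‖ < 2 ^ (k+1) * R := by
    intro k x hx
    obtain ⟨hx1, hx2⟩ := hx
    constructor
    · simpa [dist_eq_norm, not_lt] using hx2
    · simpa [dist_eq_norm] using hx1
  have hAdisj : Pairwise (Function.onFun Disjoint A) := by
    have key2 : ∀ i j : ℕ, i < j → Disjoint (A i) (A j) := by
      intro i j hij
      rw [Set.disjoint_left]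
      intro x hxi hxj
      have h1 := (hAsub i x hxi).2
      have h2 := (hAsub j x hxj).1
      have : (2:ℝ) ^ (i+1) * R ≤ 2 ^ j * R := by
        apply mul_le_mul_of_nonneg_right _ hR0.le
        exact pow_le_pow_right₀ one_le_two hij
      linarith
    intro i j hij
    rcases lt_or_gt_of_ne hij with h' | h'
    · exact key2 i j h'
    · exact (key2 j i h').symm
  -- measurability of the integrand
  have hFmeas : Measurable fun x : E =>
      (∫⁻ y, (ENNReal.ofReal ‖x - y‖) ^ (m - (N:ℝ)) ∂μ) ^ p := by
    apply Measurable.pow _ measurable_const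
    apply Measurable.lintegral_prod_right'
      (f := fun q : E × E => (ENNReal.ofReal ‖q.1 - q.2‖) ^ (m - (N:ℝ)))
    apply Measurable.pow _ measurable_const
    exact ((continuous_fst.sub continuous_snd).norm.measurable).ennreal_ofReal
  -- volume of annuli
  set c : ℝ≥0∞ := volume (ball (0:E) 1) with hcdef
  have hc0 : c ≠ 0 := (measure_ball_pos volume (0:E) one_pos).ne'
  have hcT : c ≠ ⊤ := measure_ball_lt_top.ne
  have hrank : Module.finrank ℝ E = N := finrank_euclideanSpace_fin
  have hvol : ∀ k : ℕ, volume (A k) =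
      ENNReal.ofReal ((2 ^ (k+1) * R) ^ N - (2 ^ k * R) ^ N) * c := by
    intro k
    have hsub : ball (0:E) (2 ^ k * R) ⊆ ball (0:E) (2 ^ (k+1) * R) := by
      apply ball_subset_ball
      apply mul_le_mul_of_nonneg_right _ hR0.le
      exact pow_le_pow_right₀ one_le_two (Nat.le_succ k)
    rw [hAdef]
    rw [measure_diff hsub measurableSet_ball.nullMeasurableSet measure_ball_lt_top.ne]
    rw [Measure.addHaar_ball volume _ (hApow (k+1)).le, Measure.addHaar_ball volume _ (hApow k).le]
    rw [hrank, ← hcdef]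
    rw [ENNReal.ofReal_sub _ (by positivity)]
    rw [ENNReal.sub_mul (fun _ _ => hcT)]
  -- lower bound each annulus integral by a fixed constant
  set K : ℝ≥0∞ := (μ B) ^ p * c * ENNReal.ofReal ((4:ℝ) ^ (-s) * ((2:ℝ) ^ N - 1)) with hKdef
  have hK0 : K ≠ 0 := by
    rw [hKdef]
    have h1 : (μ B) ^ p ≠ 0 := (ENNReal.rpow_pos hB hBne).ne'
    have h2 : (0:ℝ) < (4:ℝ) ^ (-s) * ((2:ℝ) ^ N - 1) := by
      have : (1:ℝ) < (2:ℝ) ^ N := one_lt_pow₀ (one_lt_two : (1:ℝ) < 2) (by omega : N ≠ 0)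
      have h4 : (0:ℝ) < (4:ℝ) ^ (-s) := Real.rpow_pos_of_pos (by norm_num) _
      nlinarith
    simp only [ne_eq, mul_eq_zero, not_or]
    exact ⟨⟨h1, hc0⟩, (ENNReal.ofReal_pos.mpr h2).ne'⟩
  have hannulus : ∀ k : ℕ, K ≤
      ∫⁻ x in A k, (∫⁻ y, (ENNReal.ofReal ‖x - y‖) ^ (m - (N:ℝ)) ∂μ) ^ p ∂volume := by
    intro k
    set r : ℝ := 2 ^ k * R with hrdef
    have hr0 : 0 < r := hApow k
    have hr1 : 1 ≤ r := by
      rw [hrdef]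
      calc (1:ℝ) = 1 * 1 := by ring
        _ ≤ 2 ^ k * R := by
            apply mul_le_mul (one_le_pow₀ one_le_two) hR1 zero_le_one (by positivity)
    have step1 : ENNReal.ofReal ((4 * r) ^ (-s)) * (μ B) ^ p * volume (A k) ≤
        ∫⁻ x in A k, (∫⁻ y, (ENNReal.ofReal ‖x - y‖) ^ (m - (N:ℝ)) ∂μ) ^ p ∂volume := by
      rw [← setLIntegral_const (A k)]
      refine setLIntegral_mono hFmeas fun x hx => ?_
      obtain ⟨hx1, hx2⟩ := hAsub k x hx
      have hxR : R ≤ ‖x‖ := le_trans (by nlinarith [one_le_pow₀ (one_le_two : (1:ℝ) ≤ 2) (n := k)]) hx1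
      refine le_trans ?_ (key x hxR)
      apply mul_le_mul_left
      apply ENNReal.ofReal_le_ofReal
      have h2xpos : (0:ℝ) < 2 * ‖x‖ := by linarith
      apply Real.rpow_le_rpow_of_nonpos h2xpos _ (by linarith)
      have : ‖x‖ < 2 ^ (k+1) * R := hx2
      have h2k : (2:ℝ) ^ (k+1) * R = 2 * r := by rw [hrdef]; ring
      nlinarith
    refine le_trans ?_ step1
    rw [hvol k]
    have hbig : (2:ℝ) ^ (k+1) * R = 2 * r := by rw [hrdef]; ring
    rw [hbig, ← hrdef]
    -- now: K ≤ ofReal ((4r)^(-s)) * (μ B)^p * (ofReal ((2r)^N - r^N) * c)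
    have hreal : (4:ℝ) ^ (-s) * ((2:ℝ) ^ N - 1) ≤ (4 * r) ^ (-s) * ((2 * r) ^ N - r ^ N) := by
      have e1 : ((2:ℝ) * r) ^ N - r ^ N = ((2:ℝ) ^ N - 1) * r ^ N := by
        rw [mul_pow]; ring
      have e2 : ((4:ℝ) * r) ^ (-s) = 4 ^ (-s) * r ^ (-s) :=
        Real.mul_rpow (by norm_num) hr0.le
      rw [e1, e2]
      have hrs : (0:ℝ) < r ^ (-s) := Real.rpow_pos_of_pos hr0 _
      have h2N : (0:ℝ) ≤ (2:ℝ) ^ N - 1 := by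
        have : (1:ℝ) ≤ (2:ℝ) ^ N := one_le_pow₀ one_le_two
        linarith
      have hfin : (1:ℝ) ≤ r ^ (-s) * r ^ N := by
        rw [← Real.rpow_natCast r N, ← Real.rpow_add hr0]
        apply Real.one_le_rpow hr1
        linarith
      have h4 : (0:ℝ) < (4:ℝ) ^ (-s) := Real.rpow_pos_of_pos (by norm_num) _
      calc (4:ℝ) ^ (-s) * ((2:ℝ) ^ N - 1)
          = (4:ℝ) ^ (-s) * ((2:ℝ) ^ N - 1) * 1 := by ring
        _ ≤ (4:ℝ) ^ (-s) * ((2:ℝ) ^ N - 1) * (r ^ (-s) * r ^ N) := by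
            apply mul_le_mul_of_nonneg_left hfin (by positivity)
        _ = 4 ^ (-s) * r ^ (-s) * (((2:ℝ) ^ N - 1) * r ^ N) := by ring
    rw [hKdef]
    calc (μ B) ^ p * c * ENNReal.ofReal ((4:ℝ) ^ (-s) * ((2:ℝ) ^ N - 1))
        ≤ (μ B) ^ p * c * ENNReal.ofReal ((4 * r) ^ (-s) * ((2 * r) ^ N - r ^ N)) := by
          exact mul_le_mul_right (ENNReal.ofReal_le_ofReal hreal) _
      _ = ENNReal.ofReal ((4 * r) ^ (-s)) * (μ B) ^ p *
            (ENNReal.ofReal ((2 * r) ^ N - r ^ N) * c) := by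
          rw [ENNReal.ofReal_mul (Real.rpow_nonneg (by positivity) _)]
          ring
  -- sum over annuli diverges
  have htop : (⊤:ℝ≥0∞) ≤ ∫⁻ x, (∫⁻ y, (ENNReal.ofReal ‖x - y‖) ^ (m - (N:ℝ)) ∂μ) ^ p := by
    calc (⊤:ℝ≥0∞) = ∑' _ : ℕ, K := (ENNReal.tsum_const_eq_top_of_ne_zero hK0).symm
      _ ≤ ∑' k, ∫⁻ x in A k, (∫⁻ y, (ENNReal.ofReal ‖x - y‖) ^ (m - (N:ℝ)) ∂μ) ^ p ∂volume :=
          ENNReal.tsum_le_tsum hannulus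
      _ = ∫⁻ x in ⋃ k, A k, (∫⁻ y, (ENNReal.ofReal ‖x - y‖) ^ (m - (N:ℝ)) ∂μ) ^ p ∂volume :=
          (lintegral_iUnion hAmeas hAdisj _).symm
      _ ≤ ∫⁻ x, (∫⁻ y, (ENNReal.ofReal ‖x - y‖) ^ (m - (N:ℝ)) ∂μ) ^ p ∂volume :=
          setLIntegral_le_lintegral _ _
  exact absurd h (by rw [top_le_iff.mp htop]; exact lt_irrefl _)
end

section
/- Let $0 < m < N$ and let $\mu$ be a positive Borel measure on $\mathbb{R}^N$. If the Riesz potential $I_m\mu$ satisfies the weak-$L^1$ bound $\sup_{\lambda>0} \lambda\, |\{x : I_m\mu(x) > \lambda\}| < \infty$, then $\mu = 0$. -/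
open MeasureTheory Metric ENNReal

/-- If the Riesz potential `I_m μ` of a positive Borel measure `μ` on `ℝ^N`
satisfies the weak-`L¹` bound, then `μ = 0`. -/
theorem stmt1 (N : ℕ) (hN : 2 ≤ N) (m : ℝ) (hm0 : 0 < m) (hmN : m < N)
    (μ : Measure (EuclideanSpace ℝ (Fin N)))
    (h : ∃ C : ℝ≥0∞, C ≠ ⊤ ∧ ∀ t : ℝ, 0 < t →
      ENNReal.ofReal t *
        volume {x : EuclideanSpace ℝ (Fin N) |
          ENNReal.ofReal t < ∫⁻ y, (ENNReal.ofReal ‖x - y‖) ^ (m - (N : ℝ)) ∂μ} ≤ C) :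
    μ = 0 := by
  by_contra hμ
  haveI : Nonempty (Fin N) := ⟨⟨0, by omega⟩⟩
  haveI : Nontrivial (EuclideanSpace ℝ (Fin N)) :=
    inferInstance
  obtain ⟨C, hC, hbound⟩ := h
  have hexp_neg : m - (N : ℝ) < 0 := by linarith
  -- find a ball of positive measure
  have huniv : μ Set.univ ≠ 0 := by
    simpa [Measure.measure_univ_eq_zero] using hμ
  obtain ⟨n, hn⟩ : ∃ n : ℕ, μ (ball (0 : EuclideanSpace ℝ (Fin N)) n) ≠ 0 := by
    by_contra hall
    push_neg at hall
    apply huniv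
    rw [← Metric.iUnion_ball_nat (0 : EuclideanSpace ℝ (Fin N))]
    exact measure_iUnion_null hall
  set R : ℝ := (n : ℝ) with hRdef
  have hR0 : 0 < R := by
    rcases lt_or_ge 0 R with h0 | h0
    · exact h0
    · exact absurd (by rw [ball_eq_empty.2 h0]; simp) hn
  set b : ℝ≥0∞ := min (μ (ball (0 : EuclideanSpace ℝ (Fin N)) R)) 1 with hbdef
  have hb0 : b ≠ 0 := by
    simp only [hbdef, ne_eq, min_eq_iff]
    rintro (⟨h1, -⟩ | ⟨h1, -⟩) <;> simp_all
  have hbtop : b ≠ ⊤ := ne_top_of_le_ne_top one_ne_top (min_le_right _ _)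
  have hble : b ≤ μ (ball (0 : EuclideanSpace ℝ (Fin N)) R) := min_le_left _ _
  set b2 : ℝ≥0∞ := b / 2 with hb2def
  have hb20 : b2 ≠ 0 := by
    simpa [hb2def] using (ENNReal.div_pos hb0 (ENNReal.ofNat_ne_top (n := 2))).ne'
  have hb2top : b2 ≠ ⊤ := by
    exact (ENNReal.div_lt_top hbtop (by norm_num)).ne
  set V : ℝ≥0∞ := volume (ball (0 : EuclideanSpace ℝ (Fin N)) 1) with hVdef
  have hV0 : V ≠ 0 := (measure_ball_pos _ _ one_pos).ne'
  have hVtop : V ≠ ⊤ := measure_ball_lt_top.ne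
  set D : ℝ≥0∞ := b2 * V with hDdef
  have hD0 : D ≠ 0 := mul_ne_zero hb20 hV0
  have hDtop : D ≠ ⊤ := ENNReal.mul_ne_top hb2top hVtop
  -- key estimate
  have key : ∀ r : ℝ, max R 1 ≤ r →
      ENNReal.ofReal (2 ^ (m - (N : ℝ)) * r ^ m) * D ≤ C := by
    intro r hr
    have hrR : R ≤ r := le_trans (le_max_left _ _) hr
    have hr1 : (1 : ℝ) ≤ r := le_trans (le_max_right _ _) hr
    have hrpos : 0 < r := lt_of_lt_of_le one_pos hr1
    have hrRpos : 0 < r + R := by linarith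
    set c : ℝ≥0∞ := ENNReal.ofReal ((r + R) ^ (m - (N : ℝ))) with hcdef
    have hc0 : c ≠ 0 := by
      simp [hcdef, ENNReal.ofReal_eq_zero, not_le]
      exact Real.rpow_pos_of_pos hrRpos _
    have hctop : c ≠ ⊤ := ENNReal.ofReal_ne_top
    -- lower bound for the potential on ball 0 r
    have hpot : ∀ x ∈ ball (0 : EuclideanSpace ℝ (Fin N)) r,
        c * b ≤ ∫⁻ y, (ENNReal.ofReal ‖x - y‖) ^ (m - (N : ℝ)) ∂μ := by
      intro x hx
      have hx' : ‖x‖ < r := mem_ball_zero_iff.1 hx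
      calc c * b ≤ c * μ (ball (0 : EuclideanSpace ℝ (Fin N)) R) :=
            mul_le_mul' le_rfl hble
        _ = ∫⁻ _ in ball (0 : EuclideanSpace ℝ (Fin N)) R, c ∂μ := by
            rw [setLIntegral_const]
        _ ≤ ∫⁻ y in ball (0 : EuclideanSpace ℝ (Fin N)) R,
              (ENNReal.ofReal ‖x - y‖) ^ (m - (N : ℝ)) ∂μ := by
            refine setLIntegral_mono' measurableSet_ball fun y hy => ?_
            have hy' : ‖y‖ < R := mem_ball_zero_iff.1 hy
            rcases eq_or_lt_of_le (norm_nonneg (x - y)) with h0 | h0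
            · rw [← h0]
              simp [ENNReal.zero_rpow_of_neg hexp_neg]
            · rw [ENNReal.ofReal_rpow_of_pos h0]
              apply ENNReal.ofReal_le_ofReal
              apply Real.rpow_le_rpow_of_nonpos h0 _ hexp_neg.le
              calc ‖x - y‖ ≤ ‖x‖ + ‖y‖ := norm_sub_le _ _
                _ ≤ r + R := by linarith
        _ ≤ ∫⁻ y, (ENNReal.ofReal ‖x - y‖) ^ (m - (N : ℝ)) ∂μ :=
            setLIntegral_le_lintegral _ _
    -- choose the level t
    have hcb0 : c * b ≠ 0 := mul_ne_zero hc0 hb0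
    have hcbtop : c * b ≠ ⊤ := ENNReal.mul_ne_top hctop hbtop
    set t : ℝ := (c * b / 2).toReal with htdef
    have htop2 : c * b / 2 ≠ ⊤ := (ENNReal.div_lt_top hcbtop (by norm_num)).ne
    have hteq : ENNReal.ofReal t = c * b / 2 := ENNReal.ofReal_toReal htop2
    have ht0 : 0 < t := ENNReal.toReal_pos
      ((ENNReal.div_pos hcb0 ENNReal.ofNat_ne_top).ne') htop2
    have hsub : ball (0 : EuclideanSpace ℝ (Fin N)) r ⊆
        {x : EuclideanSpace ℝ (Fin N) |
          ENNReal.ofReal t < ∫⁻ y, (ENNReal.ofReal ‖x - y‖) ^ (m - (N : ℝ)) ∂μ} := by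
      intro x hx
      have : ENNReal.ofReal t < c * b := by
        rw [hteq]; exact ENNReal.half_lt_self hcb0 hcbtop
      exact lt_of_lt_of_le this (hpot x hx)
    have hvol : volume (ball (0 : EuclideanSpace ℝ (Fin N)) r)
        = ENNReal.ofReal (r ^ N) * V := by
      rw [Measure.addHaar_ball volume (0 : EuclideanSpace ℝ (Fin N)) hrpos.le, finrank_euclideanSpace_fin]
    have hmain : ENNReal.ofReal t * (ENNReal.ofReal (r ^ N) * V) ≤ C := by
      calc ENNReal.ofReal t * (ENNReal.ofReal (r ^ N) * V)
          = ENNReal.ofReal t * volume (ball (0 : EuclideanSpace ℝ (Fin N)) r) := by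
            rw [hvol]
        _ ≤ ENNReal.ofReal t * volume {x : EuclideanSpace ℝ (Fin N) |
              ENNReal.ofReal t < ∫⁻ y, (ENNReal.ofReal ‖x - y‖) ^ (m - (N : ℝ)) ∂μ} :=
            mul_le_mul' le_rfl (measure_mono hsub)
        _ ≤ C := hbound t ht0
    -- compare with the claimed bound
    have hreal : 2 ^ (m - (N : ℝ)) * r ^ m ≤ (r + R) ^ (m - (N : ℝ)) * r ^ N := by
      have h2r : (2 * r) ^ (m - (N : ℝ)) ≤ (r + R) ^ (m - (N : ℝ)) := by
        apply Real.rpow_le_rpow_of_nonpos hrRpos (by linarith) hexp_neg.le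
      have heq : (2 * r) ^ (m - (N : ℝ)) * r ^ N = 2 ^ (m - (N : ℝ)) * r ^ m := by
        rw [Real.mul_rpow (by norm_num) hrpos.le, mul_assoc,
          ← Real.rpow_natCast r N, ← Real.rpow_add hrpos]
        ring_nf
      calc 2 ^ (m - (N : ℝ)) * r ^ m = (2 * r) ^ (m - (N : ℝ)) * r ^ N := heq.symm
        _ ≤ (r + R) ^ (m - (N : ℝ)) * r ^ N := by
            apply mul_le_mul_of_nonneg_right h2r (by positivity)
    calc ENNReal.ofReal (2 ^ (m - (N : ℝ)) * r ^ m) * D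
        ≤ ENNReal.ofReal ((r + R) ^ (m - (N : ℝ)) * r ^ N) * D :=
          mul_le_mul' (ENNReal.ofReal_le_ofReal hreal) le_rfl
      _ = (c * ENNReal.ofReal (r ^ N)) * (b2 * V) := by
          rw [ENNReal.ofReal_mul (by positivity), hDdef]
      _ = (c * b2) * (ENNReal.ofReal (r ^ N) * V) := by ring
      _ = ENNReal.ofReal t * (ENNReal.ofReal (r ^ N) * V) := by
          rw [hteq, hb2def, mul_div_assoc]
      _ ≤ C := hmain
  -- derive a contradiction by choosing r large
  have hCD : C / D ≠ ⊤ := by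
    intro htop
    exact hC (by simpa [ENNReal.div_eq_top, hD0, hDtop] using htop)
  set K : ℝ := (C / D).toReal with hKdef
  have hK0 : 0 ≤ K := ENNReal.toReal_nonneg
  set s : ℝ := ((K + 1) * 2 ^ ((N : ℝ) - m)) ^ (1 / m) with hsdef
  have hbase : 0 < (K + 1) * 2 ^ ((N : ℝ) - m) := by positivity
  set r : ℝ := max (max R 1) s with hrdef
  have hsr : s ≤ r := le_max_right _ _
  have hs0 : 0 ≤ s := Real.rpow_nonneg hbase.le _
  have hkey := key r (le_max_left _ _)
  have hsm : s ^ m = (K + 1) * 2 ^ ((N : ℝ) - m) := by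
    rw [hsdef, ← Real.rpow_mul hbase.le, one_div_mul_cancel hm0.ne', Real.rpow_one]
  have hX : K + 1 ≤ 2 ^ (m - (N : ℝ)) * r ^ m := by
    have hrm : s ^ m ≤ r ^ m := Real.rpow_le_rpow hs0 hsr hm0.le
    have h22 : (2 : ℝ) ^ (m - (N : ℝ)) * 2 ^ ((N : ℝ) - m) = 1 := by
      rw [← Real.rpow_add (by norm_num : (0:ℝ) < 2)]
      norm_num
    calc K + 1 = 2 ^ (m - (N : ℝ)) * ((K + 1) * 2 ^ ((N : ℝ) - m)) := by
          rw [show (2:ℝ) ^ (m - (N : ℝ)) * ((K + 1) * 2 ^ ((N : ℝ) - m))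
            = (2 ^ (m - (N : ℝ)) * 2 ^ ((N : ℝ) - m)) * (K + 1) by ring, h22, one_mul]
      _ = 2 ^ (m - (N : ℝ)) * s ^ m := by rw [hsm]
      _ ≤ 2 ^ (m - (N : ℝ)) * r ^ m := by
          have : (0:ℝ) < 2 ^ (m - (N : ℝ)) := Real.rpow_pos_of_pos (by norm_num) _
          nlinarith
  have hle : ENNReal.ofReal (2 ^ (m - (N : ℝ)) * r ^ m) ≤ C / D :=
    (ENNReal.le_div_iff_mul_le (Or.inl hD0) (Or.inl hDtop)).2 hkey
  have hfin : 2 ^ (m - (N : ℝ)) * r ^ m ≤ K :=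
    (ENNReal.ofReal_le_iff_le_toReal hCD).1 hle
  linarith
end

section
/- (Hardy-type inequality, necessity) Let $1 \le q < \infty$, $\nu$ a $\sigma$-finite positive measure on $\mathbb{R}^N$, and $\tilde u, \tilde v$ nonnegative measurable functions with $\tilde v > 0$ a.e. Suppose there is a constant $C_0$ such that for all nonnegative measurable $\tilde g$, $\big[\int_{\mathbb{R}^N} \big(\int_{B_{|x|/2}} \tilde g(y)\,dy\big)^q \tilde u(x)\,d\nu(x)\big]^{1/q} \le C_0 \int_{\mathbb{R}^N} \tilde g(x)\tilde v(x)\,dx$. Then $\sup_{R>0} \big(\int_{\{|x| \ge 2R\}} \tilde u(x)\,d\nu(x)\big)^{1/q} \cdot \operatorname{esssup}_{x \in B_R} \tilde v(x)^{-1} < \infty$. -/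
open MeasureTheory Metric ENNReal

/-- Hardy-type inequality, necessity. -/
theorem stmt6 (N : ℕ) (hN : 2 ≤ N) (q : ℝ) (hq : 1 ≤ q)
    (ν : Measure (EuclideanSpace ℝ (Fin N))) [SigmaFinite ν]
    (u v : EuclideanSpace ℝ (Fin N) → ℝ≥0∞) (hu : Measurable u) (hv : Measurable v)
    (hv0 : ∀ᵐ x : EuclideanSpace ℝ (Fin N), v x ≠ 0)
    (C₀ : ℝ≥0∞) (hC₀ : C₀ ≠ ⊤)
    (h : ∀ g : EuclideanSpace ℝ (Fin N) → ℝ≥0∞, Measurable g →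
      (∫⁻ x, (∫⁻ y in ball (0 : EuclideanSpace ℝ (Fin N)) (‖x‖ / 2), g y) ^ q * u x ∂ν)
          ^ (1 / q) ≤
        C₀ * ∫⁻ x, g x * v x) :
    (⨆ (R : ℝ) (_ : 0 < R),
      (∫⁻ x in {x : EuclideanSpace ℝ (Fin N) | 2 * R ≤ ‖x‖}, u x ∂ν) ^ (1 / q) *
        essSup (fun x => (v x)⁻¹)
          (volume.restrict (ball (0 : EuclideanSpace ℝ (Fin N)) R))) < ⊤ := by
  have hq0 : (0:ℝ) < q := lt_of_lt_of_le one_pos hq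
  refine lt_of_le_of_lt (iSup_le fun R => iSup_le fun hR => ?_) (lt_top_iff_ne_top.2 hC₀)
  set A : ℝ≥0∞ :=
    (∫⁻ x in {x : EuclideanSpace ℝ (Fin N) | 2 * R ≤ ‖x‖}, u x ∂ν) ^ (1/q) with hA
  refine ENNReal.mul_le_of_forall_lt fun a ha t ht => ?_
  refine le_trans (mul_le_mul_left ha.le t) ?_
  rcases eq_or_ne t 0 with rfl | ht0
  · simp
  have httop : t ≠ ⊤ := ne_top_of_lt ht
  -- the set where v⁻¹ > t, inside the ball
  set M : Set (EuclideanSpace ℝ (Fin N)) :=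
    ball (0 : EuclideanSpace ℝ (Fin N)) R ∩ {x | t < (v x)⁻¹} with hM
  have hMmeas : MeasurableSet M :=
    measurableSet_ball.inter (measurableSet_lt measurable_const hv.inv)
  have hMpos : volume M ≠ 0 := by
    intro h0
    have hres : (volume.restrict (ball (0 : EuclideanSpace ℝ (Fin N)) R))
        {x | t < (v x)⁻¹} = 0 := by
      rw [Measure.restrict_apply (show MeasurableSet {x | t < (v x)⁻¹} from measurableSet_lt measurable_const hv.inv), Set.inter_comm]
      exact h0
    have hle : essSup (fun x => (v x)⁻¹)
        (volume.restrict (ball (0 : EuclideanSpace ℝ (Fin N)) R)) ≤ t := by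
      refine essSup_le_of_ae_le _ ?_
      rw [Filter.EventuallyLE, ae_iff]
      simpa [not_le] using hres
    exact absurd ht (not_lt.2 hle)
  have hMfin : volume M ≠ ⊤ :=
    ne_top_of_le_ne_top measure_ball_lt_top.ne (measure_mono Set.inter_subset_left)
  -- test function
  set g : EuclideanSpace ℝ (Fin N) → ℝ≥0∞ := M.indicator (fun _ => 1) with hg
  have hgm : Measurable g := (measurable_const.indicator hMmeas)
  have htest := h g hgm
  -- RHS bound
  have hRHS : (∫⁻ x, g x * v x) ≤ t⁻¹ * volume M := by
    have hb : ∀ x, g x * v x ≤ M.indicator (fun _ => t⁻¹) x := by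
      intro x
      by_cases hx : x ∈ M
      · simp only [hg, Set.indicator_of_mem hx, one_mul]
        exact le_of_lt (ENNReal.lt_inv_iff_lt_inv.mp hx.2)
      · simp [hg, Set.indicator_of_notMem hx]
    calc (∫⁻ x, g x * v x) ≤ ∫⁻ x, M.indicator (fun _ => t⁻¹) x := lintegral_mono hb
      _ = t⁻¹ * volume M := by
          rw [lintegral_indicator hMmeas, setLIntegral_const]
  -- inner integral lower bound
  have hinner : ∀ x : EuclideanSpace ℝ (Fin N), x ∈ {x : EuclideanSpace ℝ (Fin N) | 2 * R ≤ ‖x‖} →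
      volume M ≤ ∫⁻ y in ball (0 : EuclideanSpace ℝ (Fin N)) (‖x‖ / 2), g y := by
    intro x hx
    have hMB : M ⊆ ball (0 : EuclideanSpace ℝ (Fin N)) (‖x‖ / 2) := by
      refine Set.inter_subset_left.trans (ball_subset_ball ?_)
      have h2 : (2:ℝ) * R ≤ ‖x‖ := hx
      linarith
    have heq : (∫⁻ y in ball (0 : EuclideanSpace ℝ (Fin N)) (‖x‖ / 2), g y) = volume M := by
      rw [hg, lintegral_indicator hMmeas, setLIntegral_one,
        Measure.restrict_apply hMmeas, Set.inter_eq_self_of_subset_left hMB]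
    exact heq.ge
  -- LHS bound
  have hLHS : volume M * A ≤
      (∫⁻ x, (∫⁻ y in ball (0 : EuclideanSpace ℝ (Fin N)) (‖x‖ / 2), g y) ^ q * u x ∂ν)
        ^ (1/q) := by
    have h1 : (volume M) ^ q *
        (∫⁻ x in {x : EuclideanSpace ℝ (Fin N) | 2 * R ≤ ‖x‖}, u x ∂ν) ≤
        ∫⁻ x, (∫⁻ y in ball (0 : EuclideanSpace ℝ (Fin N)) (‖x‖ / 2), g y) ^ q * u x ∂ν := by
      rw [← lintegral_const_mul _ hu]
      refine le_trans ?_ (setLIntegral_le_lintegral {x : EuclideanSpace ℝ (Fin N) | 2 * R ≤ ‖x‖} _)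
      refine setLIntegral_mono' (isClosed_le continuous_const continuous_norm).measurableSet
        fun x hx => ?_
      exact mul_le_mul_left (ENNReal.rpow_le_rpow (hinner x hx) hq0.le) _
    calc volume M * A
        = ((volume M) ^ q *
            (∫⁻ x in {x : EuclideanSpace ℝ (Fin N) | 2 * R ≤ ‖x‖}, u x ∂ν)) ^ (1/q) := by
          rw [ENNReal.mul_rpow_of_nonneg _ _ (by positivity : (0:ℝ) ≤ 1/q),
            ← ENNReal.rpow_mul, mul_one_div, div_self hq0.ne', ENNReal.rpow_one, hA]
      _ ≤ _ := ENNReal.rpow_le_rpow h1 (by positivity)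
  -- combine
  have hAle : A ≤ C₀ * t⁻¹ := by
    have hchain : A * volume M ≤ (C₀ * t⁻¹) * volume M := by
      calc A * volume M = volume M * A := mul_comm _ _
        _ ≤ _ := hLHS
        _ ≤ C₀ * (t⁻¹ * volume M) := htest.trans (mul_le_mul_right hRHS _)
        _ = (C₀ * t⁻¹) * volume M := by ring
    exact (ENNReal.mul_le_mul_iff_left hMpos hMfin).mp hchain
  calc A * t ≤ (C₀ * t⁻¹) * t := mul_le_mul_left hAle t
    _ = C₀ * (t⁻¹ * t) := mul_assoc _ _ _
    _ = C₀ := by rw [ENNReal.inv_mul_cancel ht0 httop, mul_one]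
end
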